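/- Let V be a nonempty finite type, T ≥ 1, and for each t = 1,…,T let K_t : V → V → ℝ be a Markov transition kernel on V with K_t(x,y) > 0 for all x,y. Fix β > 0, r : V → ℝ, and define partial rewards r_0 := r and r_t(x) := β·log( Σ_{x_0,…,x_{t-1}} (∏_{u=1}^{t} K_u(x_u,x_{u-1}))·exp(r(x_0)/β) ) at x_t = x. Then for every 1 ≤ t ≤ T and every x ∈ V, the maximum over all PMFs p on V of the per-step objective Σ_{y∈V} p(y)·r_{t-1}(y) − β·D(p‖K_t(x,·)) equals r_t(x). -/

import Mathlib

noncomputable section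

/-- Extend a path `x_0,…,x_{t-1}` (given by `path : Fin t → V`) to all of `ℕ`
by setting `x_i = x` for every `i ≥ t`; in particular the endpoint is `x_t = x`. -/
def seqExt {V : Type*} {t : ℕ} (path : Fin t → V) (x : V) (i : ℕ) : V :=
  if h : i < t then path ⟨i, h⟩ else x

/-- `pathSum K r β t x = Σ_{x_0,…,x_{t-1} ∈ V} (∏_{u=1}^{t} K_u(x_u, x_{u-1})) · exp(r(x_0)/β)`,
evaluated at `x_t = x`. -/
def pathSum {V : Type*} [Fintype V] (K : ℕ → V → V → ℝ) (r : V → ℝ) (β : ℝ)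
    (t : ℕ) (x : V) : ℝ :=
  ∑ path : Fin t → V,
    (∏ u ∈ Finset.range t, K (u + 1) (seqExt path x (u + 1)) (seqExt path x u)) *
      Real.exp (r (seqExt path x 0) / β)

/-- The partial rewards: `r_0 := r` and `r_t(x) := β · log(pathSum K r β t x)` for `t ≥ 1`. -/
def partialReward {V : Type*} [Fintype V] (K : ℕ → V → V → ℝ) (r : V → ℝ) (β : ℝ) :
    ℕ → V → ℝ
  | 0 => r
  | t + 1 => fun x => β * Real.log (pathSum K r β (t + 1) x)

end

/-- KL divergence between two finitely supported distributions,
with the convention `0 · log 0 = 0` (automatic since `Real.log 0 = 0`). -/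
noncomputable def klDiv {V : Type*} [Fintype V] (p q : V → ℝ) : ℝ :=
  ∑ x, p x * Real.log (p x / q x)

lemma gibbs_aux (a b : ℝ) (ha : 0 ≤ a) (hb : 0 < b) : a - b ≤ a * Real.log (a / b) := by
  rcases eq_or_lt_of_le ha with h | h
  · rw [← h]; simpa using hb.le
  · have hlog : Real.log (b / a) ≤ b / a - 1 := Real.log_le_sub_one_of_pos (by positivity)
    have hinv : Real.log (a / b) = - Real.log (b / a) := by
      rw [← Real.log_inv]; congr 1; field_simp
    have h2 : 1 - b / a ≤ Real.log (a / b) := by rw [hinv]; linarith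
    have h3 := mul_le_mul_of_nonneg_left h2 ha
    have h4 : a * (1 - b / a) = a - b := by field_simp
    linarith

lemma klDiv_nonneg' {V : Type*} [Fintype V] (p q : V → ℝ) (hp : ∀ y, 0 ≤ p y)
    (hq : ∀ y, 0 < q y) (hp1 : ∑ y, p y = 1) (hq1 : ∑ y, q y = 1) : 0 ≤ klDiv p q := by
  have h : ∑ y, (p y - q y) ≤ klDiv p q :=
    Finset.sum_le_sum fun y _ => gibbs_aux (p y) (q y) (hp y) (hq y)
  rw [Finset.sum_sub_distrib, hp1, hq1] at h
  linarith

lemma donsker {V : Type*} [Fintype V] [Nonempty V] (β : ℝ) (hβ : 0 < β) (f q : V → ℝ)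
    (hq : ∀ y, 0 < q y) (hq1 : ∑ y, q y = 1) :
    IsGreatest {v : ℝ | ∃ p : V → ℝ, (∀ y, 0 ≤ p y) ∧ (∑ y, p y = 1) ∧
      v = ∑ y, p y * f y - β * klDiv p q}
      (β * Real.log (∑ y, q y * Real.exp (f y / β))) := by
  set Z := ∑ y, q y * Real.exp (f y / β) with hZ
  have hZpos : 0 < Z :=
    Finset.sum_pos (fun y _ => mul_pos (hq y) (Real.exp_pos _)) Finset.univ_nonempty
  set p' := fun y => q y * Real.exp (f y / β) / Z with hp'
  have hp'pos : ∀ y, 0 < p' y := fun y => by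
    have := mul_pos (hq y) (Real.exp_pos (f y / β)); positivity
  have hp'1 : ∑ y, p' y = 1 := by
    simp only [hp', ← Finset.sum_div]; field_simp; exact hZ.symm
  have hratio : ∀ y, p' y / q y = Real.exp (f y / β) / Z := fun y => by
    rw [hp']; field_simp [(hq y).ne']
  constructor
  · refine ⟨p', fun y => (hp'pos y).le, hp'1, ?_⟩
    have key : ∀ y, p' y * f y - β * (p' y * Real.log (p' y / q y)) = β * Real.log Z * p' y := by
      intro y
      rw [hratio y, Real.log_div (Real.exp_pos _).ne' hZpos.ne', Real.log_exp]
      field_simp; ring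
    rw [klDiv, Finset.mul_sum, ← Finset.sum_sub_distrib]
    simp_rw [key]
    rw [← Finset.mul_sum, hp'1, mul_one]
  · rintro v ⟨p, hp, hp1, rfl⟩
    have hid : ∀ y, p y * Real.log (p y / q y)
        = p y * Real.log (p y / p' y) + p y * (f y / β - Real.log Z) := by
      intro y
      rcases eq_or_lt_of_le (hp y) with h | h
      · simp [← h]
      · have hq' : p y / q y = (p y / p' y) * (Real.exp (f y / β) / Z) := by
          rw [hp']; field_simp [(hq y).ne']
        rw [hq', Real.log_mul (div_pos h (hp'pos y)).ne' (div_pos (Real.exp_pos _) hZpos).ne',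
          Real.log_div (Real.exp_pos _).ne' hZpos.ne', Real.log_exp]
        ring
    have hsum2 : ∑ y, p y * (f y / β - Real.log Z) = (∑ y, p y * f y) / β - Real.log Z := by
      simp_rw [mul_sub]
      rw [Finset.sum_sub_distrib, ← Finset.sum_mul, hp1, one_mul]
      congr 1
      rw [Finset.sum_div]
      exact Finset.sum_congr rfl fun y _ => by ring
    have hkl : klDiv p q = klDiv p p' + ((∑ y, p y * f y) / β - Real.log Z) := by
      rw [klDiv, klDiv]
      simp_rw [hid]
      rw [Finset.sum_add_distrib, hsum2]
    have hklpos : 0 ≤ klDiv p p' := klDiv_nonneg' p p' hp hp'pos hp1 hp'1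
    have hdiv : β * ((∑ y, p y * f y) / β) = ∑ y, p y * f y := by field_simp
    rw [hkl]
    have := mul_nonneg hβ.le hklpos
    nlinarith [hdiv]

lemma seqExt_snoc {V : Type*} {s : ℕ} (p : Fin s → V) (y x : V) (u : ℕ) (hu : u ≤ s) :
    seqExt (Fin.snoc p y) x u = seqExt p y u := by
  unfold seqExt
  by_cases h : u < s
  · rw [dif_pos (h.trans (Nat.lt_succ_self s)), dif_pos h]
    simp [Fin.snoc, h]
  · have heq : u = s := le_antisymm hu (not_lt.1 h)
    subst heq
    rw [dif_pos (Nat.lt_succ_self u), dif_neg (lt_irrefl u)]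
    simp [Fin.snoc]

lemma pathSum_succ {V : Type*} [Fintype V] (K : ℕ → V → V → ℝ) (r : V → ℝ) (β : ℝ)
    (s : ℕ) (x : V) :
    pathSum K r β (s + 1) x = ∑ y, K (s + 1) x y * pathSum K r β s y := by
  rw [pathSum, ← Equiv.sum_comp (Fin.snocEquiv fun _ : Fin (s + 1) => V),
    Fintype.sum_prod_type]
  refine Finset.sum_congr rfl fun y _ => ?_
  rw [pathSum, Finset.mul_sum]
  refine Finset.sum_congr rfl fun p _ => ?_
  have hsnoc : (Fin.snocEquiv fun _ : Fin (s + 1) => V) (y, p) = Fin.snoc p y := rfl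
  rw [hsnoc, Finset.prod_range_succ]
  have h1 : seqExt (Fin.snoc p y) x (s + 1) = x := by
    unfold seqExt; rw [dif_neg (lt_irrefl (s + 1))]
  have h2 : seqExt (Fin.snoc p y) x s = y := by
    rw [seqExt_snoc p y x s le_rfl]; unfold seqExt; rw [dif_neg (lt_irrefl s)]
  have h3 : ∀ u ∈ Finset.range s,
      K (u + 1) (seqExt (Fin.snoc p y) x (u + 1)) (seqExt (Fin.snoc p y) x u)
        = K (u + 1) (seqExt p y (u + 1)) (seqExt p y u) := fun u hu => by
    rw [seqExt_snoc p y x (u + 1) (Finset.mem_range.1 hu),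
      seqExt_snoc p y x u (le_of_lt (Finset.mem_range.1 hu))]
  rw [Finset.prod_congr rfl h3, h1, h2, seqExt_snoc p y x 0 (Nat.zero_le s)]
  ring

lemma pathSum_pos {V : Type*} [Fintype V] [Nonempty V] (K : ℕ → V → V → ℝ) (r : V → ℝ)
    (β : ℝ) (t : ℕ) (hK : ∀ u, 1 ≤ u → u ≤ t → ∀ x y, 0 < K u x y) (x : V) :
    0 < pathSum K r β t x := by
  refine Finset.sum_pos (fun p _ => mul_pos ?_ (Real.exp_pos _)) Finset.univ_nonempty
  refine Finset.prod_pos fun u hu => ?_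
  exact hK (u + 1) (Nat.le_add_left 1 u) (Nat.succ_le_of_lt (Finset.mem_range.1 hu)) _ _

lemma exp_partialReward {V : Type*} [Fintype V] [Nonempty V] (K : ℕ → V → V → ℝ) (r : V → ℝ)
    (β : ℝ) (hβ : 0 < β) (t : ℕ) (hK : ∀ u, 1 ≤ u → u ≤ t → ∀ x y, 0 < K u x y) (y : V) :
    Real.exp (partialReward K r β t y / β) = pathSum K r β t y := by
  cases t with
  | zero =>
    rw [partialReward, pathSum]
    simp [seqExt]
  | succ s =>
    simp only [partialReward]
    rw [mul_div_cancel_left₀ _ hβ.ne', Real.exp_log (pathSum_pos K r β (s + 1) hK y)]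

/-- The partial reward `r_t(x)` is the optimal value of the per-step KL-regularized
objective: the maximum over PMFs `p` of `Σ_y p(y)·r_{t-1}(y) − β·D(p‖K_t(x,·))`
equals `r_t(x)`, for every `1 ≤ t ≤ T` and every `x`. -/
theorem partialReward_is_optimal_value
    {V : Type*} [Fintype V] [Nonempty V]
    (T : ℕ) (hT : 1 ≤ T)
    (K : ℕ → V → V → ℝ)
    (hK_pos : ∀ t, 1 ≤ t → t ≤ T → ∀ x y, 0 < K t x y)
    (hK_sum : ∀ t, 1 ≤ t → t ≤ T → ∀ x, ∑ y, K t x y = 1)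
    (β : ℝ) (hβ : 0 < β) (r : V → ℝ) :
    ∀ t, 1 ≤ t → t ≤ T → ∀ x : V,
      IsGreatest
        {v : ℝ | ∃ p : V → ℝ, (∀ y, 0 ≤ p y) ∧ (∑ y, p y = 1) ∧
          v = ∑ y, p y * partialReward K r β (t - 1) y - β * klDiv p (K t x)}
        (partialReward K r β t x) := by
  intro t ht htT x
  obtain ⟨s, rfl⟩ : ∃ s, t = s + 1 := ⟨t - 1, (Nat.succ_pred_eq_of_pos ht).symm⟩
  have hKs : ∀ u, 1 ≤ u → u ≤ s → ∀ a b, 0 < K u a b := fun u h1 h2 a b =>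
    hK_pos u h1 (h2.trans (le_of_lt (Nat.lt_of_succ_le htT))) a b
  have hrw : partialReward K r β (s + 1) x
      = β * Real.log (∑ y, K (s + 1) x y * Real.exp (partialReward K r β s y / β)) := by
    have h0 : partialReward K r β (s + 1) x = β * Real.log (pathSum K r β (s + 1) x) := rfl
    rw [h0, pathSum_succ]
    congr 2
    exact Finset.sum_congr rfl fun y _ => by
      rw [exp_partialReward K r β hβ s hKs y]
  rw [hrw]
  simp only [Nat.add_sub_cancel]
  exact donsker β hβ (partialReward K r β s) (K (s + 1) x)
    (fun y => hK_pos (s + 1) ht htT x y) (hK_sum (s + 1) ht htT x)
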